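/- Let M be a metric space, L > 0, and let d_K denote the cone distance on K(M). Then for all x, x' ∈ M and all t, t' ∈ [0,L]: (i) d_K([x,t],[x',t'])² ≤ (t−t')² + (L−t)(L−t')·d(x,x')²; and (ii) if in addition d(x,x') ≤ 2, then d_K([x,t],[x',t'])² ≥ (t−t')² + (1/2)(L−t)(L−t')·d(x,x')². -/

import Mathlib

set_option maxHeartbeats 1000000


open Metric Set

/-- The cone distance on `M × [0,L]` (representatives of the cone
`K(M) = M × [0,L] / (M × {L})`):
`d_K([x,t],[x',t'])² = (L−t)² + (L−t')² − 2(L−t)(L−t')·cos(min{π, d(x,x')})`. -/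
noncomputable def coneDist {M : Type*} [PseudoMetricSpace M] (L : ℝ) (c c' : M × ℝ) : ℝ :=
  Real.sqrt ((L - c.2) ^ 2 + (L - c'.2) ^ 2 -
    2 * (L - c.2) * (L - c'.2) * Real.cos (min Real.pi (dist c.1 c'.1)))

/-- For all `x, x' ∈ M` and `t, t' ∈ [0,L]`:
(i) `d_K([x,t],[x',t'])² ≤ (t−t')² + (L−t)(L−t')·d(x,x')²`, and
(ii) if `d(x,x') ≤ 2` then `d_K([x,t],[x',t'])² ≥ (t−t')² + (1/2)(L−t)(L−t')·d(x,x')²`. -/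
theorem coneDist_sq_bounds {M : Type*} [MetricSpace M] (L : ℝ) (hL : 0 < L)
    (x x' : M) (t t' : ℝ) (ht : t ∈ Icc 0 L) (ht' : t' ∈ Icc 0 L) :
    (coneDist L (x, t) (x', t')) ^ 2 ≤
      (t - t') ^ 2 + (L - t) * (L - t') * dist x x' ^ 2 ∧
    (dist x x' ≤ 2 →
      (t - t') ^ 2 + (1 / 2) * (L - t) * (L - t') * dist x x' ^ 2 ≤
        (coneDist L (x, t) (x', t')) ^ 2) := by
  set d := dist x x' with hd
  have hd0 : 0 ≤ d := dist_nonneg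
  set θ := min Real.pi d with hθ
  have hθ0 : 0 ≤ θ := le_min Real.pi_nonneg hd0
  have hθd : θ ≤ d := min_le_right _ _
  set a := L - t with ha
  set b := L - t' with hb
  have ha0 : 0 ≤ a := by simp [ha]; linarith [ht.2]
  have hb0 : 0 ≤ b := by simp [hb]; linarith [ht'.2]
  have hcos1 : Real.cos θ ≤ 1 := Real.cos_le_one θ
  have hE : a ^ 2 + b ^ 2 - 2 * a * b * Real.cos θ
      = (t - t') ^ 2 + 2 * a * b * (1 - Real.cos θ) := by
    have h : t - t' = b - a := by rw [hb, ha]; ring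
    rw [h]; ring
  have hEnn : 0 ≤ a ^ 2 + b ^ 2 - 2 * a * b * Real.cos θ := by
    rw [hE]
    nlinarith [sq_nonneg (t - t'), mul_nonneg (mul_nonneg ha0 hb0) (sub_nonneg.2 hcos1)]
  have hsq : (coneDist L (x, t) (x', t')) ^ 2
      = a ^ 2 + b ^ 2 - 2 * a * b * Real.cos θ := by
    simp only [coneDist]
    exact Real.sq_sqrt hEnn
  constructor
  · rw [hsq, hE]
    have hub : 1 - Real.cos θ ≤ d ^ 2 / 2 := by
      have h1 : 1 - θ ^ 2 / 2 ≤ Real.cos θ := Real.one_sub_sq_div_two_le_cos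
      have h2 : θ ^ 2 ≤ d ^ 2 := by nlinarith
      linarith
    nlinarith [mul_nonneg ha0 hb0]
  · intro hd2
    have hθeq : θ = d := min_eq_right (by linarith [Real.pi_gt_three])
    have hlb : d ^ 2 / 4 ≤ 1 - Real.cos d := by
      rcases eq_or_lt_of_le hd0 with h | h
      · simp [← h]
      · have hy0 : 0 < d / 2 := by linarith
        have hy1 : d / 2 ≤ 1 := by linarith
        have hsin : d / 2 - (d / 2) ^ 3 / 4 < Real.sin (d / 2) :=
          by have := Real.sin_gt_sub_cube hy0; linarith [pow_pos hy0 3]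
        have hsin' : 3 / 4 * (d / 2) ≤ Real.sin (d / 2) := by
          nlinarith [mul_nonneg (mul_nonneg (sub_nonneg.2 hy1)
            (by linarith : (0:ℝ) ≤ 1 + d / 2)) hy0.le]
        have hsinnn : 0 ≤ Real.sin (d / 2) := by nlinarith
        have hcosd : Real.cos d = 1 - 2 * Real.sin (d / 2) ^ 2 := by
          have := Real.cos_two_mul' (d / 2)
          have h2 : 2 * (d / 2) = d := by ring
          rw [h2] at this
          rw [this]
          have := Real.sin_sq_add_cos_sq (d / 2)
          nlinarith
        rw [hcosd]
        have hp : (3 / 4 * (d / 2)) ^ 2 ≤ Real.sin (d / 2) ^ 2 :=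
          pow_le_pow_left₀ (by positivity) hsin' 2
        nlinarith [hp]
    rw [hsq, hE, hθeq]
    have hab : 0 ≤ a * b := mul_nonneg ha0 hb0
    nlinarith [mul_le_mul_of_nonneg_left hlb hab]
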